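/- Every n-player m-action game with payoffs in [0,1] admits an exact coarse correlated equilibrium whose support has size at most nm + 1. -/

import Mathlib

open Finset

section Aux

variable {n m : ℕ}

private lemma swap_prod_update (i : Fin n) (μ : Fin n → Fin m → ℝ) (j : Fin m)
    (a : Fin n → Fin m) :
    μ i (a i) * ∏ k, μ k (Function.update a i j k) = μ i j * ∏ k, μ k (a k) := by
  have h1 : (fun k => μ k (Function.update a i j k)) =
      Function.update (fun k => μ k (a k)) i (μ i j) := by
    funext k
    by_cases hk : k = i
    · subst hk; simp
    · simp [Function.update_apply, hk]
  rw [h1, Finset.prod_update_of_mem (Finset.mem_univ i),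
    ← Finset.mul_prod_erase Finset.univ (fun k => μ k (a k)) (Finset.mem_univ i)]
  have : Finset.univ \ {i} = Finset.univ.erase i := by
    ext k; simp [Finset.mem_erase, and_comm]
  rw [this]
  ring

/-- The involution trick: averaging a deviation to `j ~ μ i` over the product distribution
equals the original expectation. -/
private lemma sum_update_eq (i : Fin n) (μ : Fin n → Fin m → ℝ)
    (hμ1 : ∀ k, ∑ j, μ k j = 1) (g : (Fin n → Fin m) → ℝ) :
    ∑ j, ∑ a, μ i j * ((∏ k, μ k (a k)) * g (Function.update a i j))
      = ∑ a, (∏ k, μ k (a k)) * g a := by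
  classical
  have hinv : Function.Involutive
      (fun p : Fin m × (Fin n → Fin m) => (p.2 i, Function.update p.2 i p.1)) := by
    intro p
    simp [Function.update_idem, Function.update_eq_self]
  set e := hinv.toPerm with he
  have hcomp := Equiv.sum_comp e
    (fun p : Fin m × (Fin n → Fin m) =>
      μ i p.1 * ((∏ k, μ k (p.2 k)) * g (Function.update p.2 i p.1)))
  have hL : ∑ j, ∑ a, μ i j * ((∏ k, μ k (a k)) * g (Function.update a i j))
      = ∑ p : Fin m × (Fin n → Fin m),
          μ i p.1 * ((∏ k, μ k (p.2 k)) * g (Function.update p.2 i p.1)) := by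
    rw [Fintype.sum_prod_type]
  rw [hL, ← hcomp]
  have hpt : ∀ p : Fin m × (Fin n → Fin m),
      μ i (e p).1 * ((∏ k, μ k ((e p).2 k)) * g (Function.update (e p).2 i (e p).1))
        = μ i p.1 * ((∏ k, μ k (p.2 k)) * g p.2) := by
    intro ⟨j, a⟩
    have he1 : (e (j, a)).1 = a i := rfl
    have he2 : (e (j, a)).2 = Function.update a i j := rfl
    rw [he1, he2]
    have h3 : Function.update (Function.update a i j) i (a i) = a := by
      simp [Function.update_idem, Function.update_eq_self]
    rw [h3]
    have h4 := swap_prod_update i μ j a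
    show μ i (a i) * ((∏ k, μ k (Function.update a i j k)) * g a)
        = μ i j * ((∏ k, μ k (a k)) * g a)
    rw [← mul_assoc, h4, mul_assoc]
  calc ∑ p : Fin m × (Fin n → Fin m),
        μ i (e p).1 * ((∏ k, μ k ((e p).2 k)) * g (Function.update (e p).2 i (e p).1))
      = ∑ p : Fin m × (Fin n → Fin m), μ i p.1 * ((∏ k, μ k (p.2 k)) * g p.2) := by
        exact Finset.sum_congr rfl fun p _ => hpt p
    _ = (∑ j, μ i j) * ∑ a, (∏ k, μ k (a k)) * g a := by
        rw [Fintype.sum_prod_type, Finset.sum_mul]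
        exact Finset.sum_congr rfl fun j _ => by rw [Finset.mul_sum]
    _ = ∑ a, (∏ k, μ k (a k)) * g a := by rw [hμ1 i, one_mul]

/-- Existence of a point of the convex hull of the regret vectors lying in the
nonpositive orthant. -/
private lemma exists_nonpos_in_hull (hm : 0 < m) (u : Fin n → (Fin n → Fin m) → ℝ) :
    ∃ y ∈ convexHull ℝ (Set.range (fun (a : Fin n → Fin m) (p : Fin n × Fin m) =>
        u p.1 (Function.update a p.1 p.2) - u p.1 a)),
      ∀ p : Fin n × Fin m, y p ≤ 0 := by
  classical
  set v : (Fin n → Fin m) → (Fin n × Fin m → ℝ) :=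
    fun a p => u p.1 (Function.update a p.1 p.2) - u p.1 a with hv
  by_contra hcon
  push_neg at hcon
  -- the hull is disjoint from the nonpositive orthant
  set C : Set (Fin n × Fin m → ℝ) := Set.pi Set.univ (fun _ => Set.Iic (0 : ℝ)) with hC
  have hdisj : Disjoint (convexHull ℝ (Set.range v)) C := by
    rw [Set.disjoint_left]
    intro y hy hyC
    obtain ⟨p, hp⟩ := hcon y hy
    exact absurd (hyC p (Set.mem_univ p)) (not_le.mpr hp)
  have hKc : IsCompact (convexHull ℝ (Set.range v)) :=
    (Set.finite_range v).isCompact_convexHull ℝ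
  have hKconv : Convex ℝ (convexHull ℝ (Set.range v)) := convex_convexHull ℝ _
  have hCconv : Convex ℝ C := convex_pi (fun _ _ => convex_Iic 0)
  have hCclosed : IsClosed C := isClosed_set_pi (fun _ _ => isClosed_Iic)
  obtain ⟨f, c₁, c₂, hfK, hc, hfC⟩ :=
    geometric_hahn_banach_compact_closed hKconv hKc hCconv hCclosed hdisj
  -- c₂ < 0 since 0 ∈ C
  have h0C : (0 : Fin n × Fin m → ℝ) ∈ C := by
    intro p _; simp
  have hc2 : c₂ < 0 := by simpa using hfC 0 h0C
  -- λ p := - f (e_p) is nonnegative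
  set ep : Fin n × Fin m → (Fin n × Fin m → ℝ) := fun p => Pi.single p 1 with hep
  set lam : Fin n × Fin m → ℝ := fun p => -(f (ep p)) with hlam
  have hlamnn : ∀ p, 0 ≤ lam p := by
    intro p
    by_contra hneg
    push_neg at hneg
    have hF : 0 < f (ep p) := by simpa [hlam] using hneg
    set t : ℝ := (1 - c₂) / f (ep p) with ht
    have htpos : 0 < t := div_pos (by linarith) hF
    have hmem : (-t) • ep p ∈ C := by
      intro q _
      simp only [hep, Pi.smul_apply, smul_eq_mul, Set.mem_Iic]
      rcases eq_or_ne q p with rfl | hq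
      · simp [Pi.single_apply]; positivity
      · simp [Pi.single_apply, hq]
    have := hfC _ hmem
    rw [map_smul] at this
    have hcalc : (-t) • f (ep p) = c₂ - 1 := by
      rw [smul_eq_mul, ht]
      field_simp
      ring
    rw [hcalc] at this
    linarith
  -- f y = -∑ p, y p * lam p
  have hfy : ∀ y : Fin n × Fin m → ℝ, f y = -∑ p, y p * lam p := by
    intro y
    have hy : y = ∑ p, y p • ep p := by
      funext q
      rw [Finset.sum_apply]
      simp [hep, Pi.single_apply]
    conv_lhs => rw [hy]
    rw [map_sum]
    simp only [map_smul, smul_eq_mul, hlam]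
    rw [← Finset.sum_neg_distrib]
    congr 1
    funext p
    ring
  -- every regret vector has positive lam-weighted sum
  have hpos : ∀ a, 0 < ∑ p, v a p * lam p := by
    intro a
    have h1 : f (v a) < c₁ := hfK (v a) (subset_convexHull ℝ _ ⟨a, rfl⟩)
    have h2 := hfy (v a)
    have : -∑ p, v a p * lam p < c₁ := by rw [← h2]; exact h1
    linarith
  -- Build product distribution from lam
  set S : Fin n → ℝ := fun i => ∑ j, lam (i, j) with hS
  have hSnn : ∀ i, 0 ≤ S i := fun i => Finset.sum_nonneg fun j _ => hlamnn (i, j)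
  set μ : Fin n → Fin m → ℝ := fun i =>
    if h : 0 < S i then fun j => lam (i, j) / S i else fun _ => 1 / m with hμ
  have hμnn : ∀ i j, 0 ≤ μ i j := by
    intro i j
    rw [hμ]
    by_cases h : 0 < S i
    · simp only [dif_pos h]
      exact div_nonneg (hlamnn _) (hSnn i)
    · simp only [dif_neg h]
      positivity
  have hμ1 : ∀ i, ∑ j, μ i j = 1 := by
    intro i
    rw [hμ]
    by_cases h : 0 < S i
    · simp only [dif_pos h]
      rw [← Finset.sum_div]
      exact div_self (ne_of_gt h)
    · simp only [dif_neg h]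
      rw [Finset.sum_const, Finset.card_univ, Fintype.card_fin, nsmul_eq_mul]
      field_simp
  have hlameq : ∀ i j, lam (i, j) = S i * μ i j := by
    intro i j
    rw [hμ]
    by_cases h : 0 < S i
    · simp only [dif_pos h]
      field_simp
    · have hS0 : S i = 0 := le_antisymm (not_lt.mp h) (hSnn i)
      have : lam (i, j) = 0 := by
        have := Finset.sum_eq_zero_iff_of_nonneg (fun j _ => hlamnn (i, j)) |>.mp hS0
        exact this j (Finset.mem_univ j)
      rw [this, hS0, zero_mul]
  set π : (Fin n → Fin m) → ℝ := fun a => ∏ k, μ k (a k) with hπ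
  have hπnn : ∀ a, 0 ≤ π a := fun a => Finset.prod_nonneg fun k _ => hμnn k (a k)
  have hπ1 : ∑ a, π a = 1 := by
    rw [hπ]
    have := Finset.prod_univ_sum (fun _ : Fin n => (Finset.univ : Finset (Fin m)))
      (fun i j => μ i j)
    rw [Fintype.piFinset_univ] at this
    rw [← this]
    exact Finset.prod_eq_one fun i _ => hμ1 i
  -- key identity: expected lam-weighted regret is zero
  have hkey : ∑ a, π a * ∑ p, v a p * lam p = 0 := by
    have hswap : ∑ a, π a * ∑ p, v a p * lam p
        = ∑ p : Fin n × Fin m, lam p * ∑ a, π a * v a p := by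
      simp_rw [Finset.mul_sum]
      rw [Finset.sum_comm]
      exact Finset.sum_congr rfl fun p _ => Finset.sum_congr rfl fun a _ => by ring
    rw [hswap, Fintype.sum_prod_type]
    apply Finset.sum_eq_zero
    intro i _
    have hsplit : ∀ j, ∑ a, π a * v a (i, j)
        = (∑ a, π a * u i (Function.update a i j)) - ∑ a, π a * u i a := by
      intro j
      rw [← Finset.sum_sub_distrib]
      congr 1; funext a
      rw [hv]; ring
    have key : ∑ j, lam (i, j) * ∑ a, π a * u i (Function.update a i j)
        = ∑ j, lam (i, j) * ∑ a, π a * u i a := by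
      have h1 : ∑ j, lam (i, j) * ∑ a, π a * u i (Function.update a i j)
          = S i * ∑ j, ∑ a, μ i j * (π a * u i (Function.update a i j)) := by
        rw [Finset.mul_sum]
        congr 1; funext j
        rw [hlameq i j, Finset.mul_sum, Finset.mul_sum]
        congr 1; funext a
        ring
      have h2 := sum_update_eq i μ hμ1 (fun a => u i a)
      rw [h1]
      have h3 : ∑ j, ∑ a, μ i j * (π a * u i (Function.update a i j))
          = ∑ a, π a * u i a := by
        rw [← h2]
      rw [h3, ← Finset.sum_mul]
    calc ∑ j, lam (i, j) * ∑ a, π a * v a (i, j)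
        = ∑ j, (lam (i, j) * ∑ a, π a * u i (Function.update a i j)
            - lam (i, j) * ∑ a, π a * u i a) := by
          congr 1; funext j
          rw [hsplit j]; ring
      _ = 0 := by rw [Finset.sum_sub_distrib, key, sub_self]
  -- contradiction: the sum is strictly positive
  have hex : ∃ a, 0 < π a := by
    by_contra hno
    push_neg at hno
    have : ∀ a : Fin n → Fin m, π a = 0 := fun a => le_antisymm (hno a) (hπnn a)
    rw [Finset.sum_congr rfl (fun a _ => this a)] at hπ1
    simp at hπ1
  obtain ⟨a₀, ha₀⟩ := hex
  have hposum : 0 < ∑ a, π a * ∑ p, v a p * lam p := by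
    apply Finset.sum_pos' (fun a _ => mul_nonneg (hπnn a) (le_of_lt (hpos a)))
    exact ⟨a₀, Finset.mem_univ a₀, mul_pos ha₀ (hpos a₀)⟩
  rw [hkey] at hposum
  exact lt_irrefl 0 hposum

end Aux

/-- Every n-player m-action game with payoffs in [0,1] admits an exact
    coarse correlated equilibrium with support of size at most `nm + 1`. -/
theorem exists_cce_small_support (n m : ℕ) (hm : 0 < m)
    (u : Fin n → (Fin n → Fin m) → ℝ)
    (hu : ∀ i a, u i a ∈ Set.Icc (0 : ℝ) 1) :
    ∃ x : (Fin n → Fin m) → ℝ,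
      (∀ a, 0 ≤ x a) ∧ (∑ a, x a = 1) ∧
      (∀ i : Fin n, ∀ j : Fin m,
        ∑ a, (u i (Function.update a i j) - u i a) * x a ≤ 0) ∧
      (Finset.univ.filter (fun a : Fin n → Fin m => x a ≠ 0)).card ≤ n * m + 1 := by
  classical
  set v : (Fin n → Fin m) → (Fin n × Fin m → ℝ) :=
    fun a p => u p.1 (Function.update a p.1 p.2) - u p.1 a with hv
  obtain ⟨y, hyhull, hynp⟩ := exists_nonpos_in_hull hm u
  -- Carathéodory
  obtain ⟨ι, hfin, z, w, hz, hai, hwpos, hw1, hzw⟩ :=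
    eq_pos_convex_span_of_mem_convexHull hyhull
  -- card ι ≤ nm + 1
  have hcard : Fintype.card ι ≤ n * m + 1 := by
    have h1 := hai.card_le_finrank_succ
    have h2 : Module.finrank ℝ (vectorSpan ℝ (Set.range z)) ≤
        Module.finrank ℝ (Fin n × Fin m → ℝ) := Submodule.finrank_le _
    have h3 : Module.finrank ℝ (Fin n × Fin m → ℝ) = n * m := by
      rw [Module.finrank_pi]
      simp
    omega
  -- choose representatives
  have hrep : ∀ i : ι, ∃ a : Fin n → Fin m, v a = z i := fun i => hz ⟨i, rfl⟩
  choose rep hrepv using hrep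
  set x : (Fin n → Fin m) → ℝ :=
    fun a => ∑ i : ι, if rep i = a then w i else 0 with hx
  refine ⟨x, ?_, ?_, ?_, ?_⟩
  · intro a
    exact Finset.sum_nonneg fun i _ => by
      split <;> [exact le_of_lt (hwpos i); exact le_refl 0]
  · rw [hx]
    rw [Finset.sum_comm]
    rw [← hw1]
    exact Finset.sum_congr rfl fun i _ => by rw [Finset.sum_ite_eq Finset.univ (rep i) (fun _ => w i)]; simp
  · intro i j
    have hcalc : ∑ a, (u i (Function.update a i j) - u i a) * x a = y (i, j) := by
      rw [← hzw]
      rw [hx]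
      have : ∀ a, (u i (Function.update a i j) - u i a) * ∑ k : ι, (if rep k = a then w k else 0)
          = ∑ k : ι, (if rep k = a then w k * v a (i, j) else 0) := by
        intro a
        rw [Finset.mul_sum]
        congr 1; funext k
        split
        · rw [hv]; ring
        · ring
      rw [Finset.sum_congr rfl (fun a _ => this a), Finset.sum_comm]
      rw [Finset.sum_apply]
      apply Finset.sum_congr rfl
      intro k _
      rw [Finset.sum_ite_eq Finset.univ (rep k) (fun a => w k * v a (i, j))]
      simp only [Finset.mem_univ, if_true]
      rw [hrepv k]
      simp
    rw [hcalc]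
    exact hynp (i, j)
  · have hsub : (Finset.univ.filter (fun a : Fin n → Fin m => x a ≠ 0))
        ⊆ Finset.image rep Finset.univ := by
      intro a ha
      rw [Finset.mem_filter] at ha
      by_contra hnot
      apply ha.2
      rw [hx]
      apply Finset.sum_eq_zero
      intro k _
      rw [if_neg]
      intro hk
      exact hnot (by rw [Finset.mem_image]; exact ⟨k, Finset.mem_univ k, hk⟩)
    calc (Finset.univ.filter (fun a : Fin n → Fin m => x a ≠ 0)).card
        ≤ (Finset.image rep Finset.univ).card := Finset.card_le_card hsub
      _ ≤ Finset.univ.card := Finset.card_image_le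
      _ = Fintype.card ι := Finset.card_univ
      _ ≤ n * m + 1 := hcard
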